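/- In the ring of formal power series ℤ[[q]], the cube of the Euler product satisfies Jacobi's identity: ∏_{n=1}^{∞} (1 − qⁿ)³ = ∑_{n=0}^{∞} (−1)ⁿ (2n+1) q^{n(n+1)/2}. (Equivalently, η(τ)³ = ∑_{n∈ℤ} (4n+1) q^{(4n+1)²/8} after multiplying by q^{1/8}.) -/

import Mathlib

open PowerSeries Finset

namespace JacobiAux

noncomputable def gb : ℕ → ℕ → ℤ⟦X⟧
  | 0, 0 => 1
  | 0, _+1 => 0
  | n+1, 0 => gb n 0
  | n+1, j+1 => gb n (j+1) + X^(n-j) * gb n j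

@[simp] lemma gb_zero (n : ℕ) : gb n 0 = 1 := by
  induction n with
  | zero => rfl
  | succ n ih => rw [gb, ih]

lemma gb_succ_succ (n j : ℕ) : gb (n+1) (j+1) = gb n (j+1) + X^(n-j) * gb n j := rfl

lemma gb_of_lt : ∀ {n j : ℕ}, n < j → gb n j = 0
  | 0, j+1, _ => rfl
  | n+1, j+1, h => by
    rw [gb_succ_succ, gb_of_lt (by omega), gb_of_lt (by omega), mul_zero, add_zero]

@[simp] lemma gb_self : ∀ n, gb n n = 1
  | 0 => rfl
  | n+1 => by
    rw [gb_succ_succ, gb_of_lt (by omega), Nat.sub_self, pow_zero, one_mul, gb_self n, zero_add]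

lemma pascal2 : ∀ n j, gb (n+1) (j+1) = X^(j+1) * gb n (j+1) + gb n j := by
  intro n
  induction n with
  | zero =>
    intro j
    match j with
    | 0 => simp [gb_succ_succ, gb_of_lt (by omega : (0:ℕ) < 1)]
    | j+1 =>
      simp [gb_succ_succ, gb_of_lt (by omega : (0:ℕ) < j+1), gb_of_lt (by omega : (0:ℕ) < j+2)]
  | succ n ih =>
    intro j
    match j with
    | 0 =>
      have h1 : gb (n+2) 1 = gb (n+1) 1 + X^(n+1) * gb (n+1) 0 := gb_succ_succ (n+1) 0
      have h2 : gb (n+1) 1 = gb n 1 + X^n * gb n 0 := gb_succ_succ n 0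
      have key : gb n 1 + X^n * gb n 0 = X^1 * gb n 1 + gb n 0 := h2.symm.trans (ih 0)
      simp only [gb_zero, mul_one] at key
      rw [show (0:ℕ)+1 = 1 from rfl, h1, h2, gb_zero, gb_zero, mul_one, mul_one]
      linear_combination key
    | k+1 =>
      have h1 : gb (n+2) (k+2) = gb (n+1) (k+2) + X^(n-k) * gb (n+1) (k+1) := by
        rw [gb_succ_succ, Nat.succ_sub_succ]
      have ihA := ih (k+1)
      have ihB := ih k
      have dA : gb (n+1) (k+2) = gb n (k+2) + X^(n-(k+1)) * gb n (k+1) := gb_succ_succ n (k+1)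
      have dB : gb (n+1) (k+1) = gb n (k+1) + X^(n-k) * gb n k := gb_succ_succ n k
      rcases le_or_gt (k+1) n with h | h
      · have e1 : (X:ℤ⟦X⟧)^(n-k) * X^(k+1) = X^(n+1) := by rw [← pow_add]; congr 1; omega
        have e2 : (X:ℤ⟦X⟧)^(k+2) * X^(n-(k+1)) = X^(n+1) := by rw [← pow_add]; congr 1; omega
        calc gb (n+2) (k+2)
            = gb (n+1) (k+2) + X^(n-k) * gb (n+1) (k+1) := h1
          _ = X^(k+1+1) * gb n (k+1+1) + gb n (k+1) + X^(n-k) * (X^(k+1) * gb n (k+1) + gb n k) := by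
              rw [ihA, ihB]
          _ = X^(k+2) * gb n (k+2) + gb n (k+1) + (X^(n-k) * X^(k+1)) * gb n (k+1)
                + X^(n-k) * gb n k := by ring
          _ = X^(k+2) * gb n (k+2) + gb n (k+1) + X^(n+1) * gb n (k+1) + X^(n-k) * gb n k := by
              rw [e1]
          _ = X^(k+2) * (gb n (k+2) + X^(n-(k+1)) * gb n (k+1)) + (gb n (k+1) + X^(n-k) * gb n k) := by
              rw [mul_add, ← mul_assoc, e2]; ring
          _ = X^(k+2) * gb (n+1) (k+2) + gb (n+1) (k+1) := by rw [dA, dB]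
          _ = X^(k+1+1) * gb (n+1) (k+1+1) + gb (n+1) (k+1) := rfl
      · have z1 : gb n (k+1) = 0 := gb_of_lt (by omega)
        have z2 : gb n (k+1+1) = 0 := gb_of_lt (by omega)
        have hnk : n - k = 0 := by omega
        rw [h1, ihA, ihB, z1, z2, hnk]
        ring



noncomputable def cc (n j : ℕ) : ℤ⟦X⟧ := (-1)^j * gb n j * X^(Nat.choose (n-j) 2)

lemma cc_top (n : ℕ) : cc n (n+1) = 0 := by
  unfold cc; rw [gb_of_lt (by omega)]; ring

lemma cc_rec (n i : ℕ) (h : i ≤ n) : cc (n+1) (i+1) = cc n (i+1) * X^n - cc n i := by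
  unfold cc
  rw [pascal2, Nat.succ_sub_succ]
  rcases lt_or_eq_of_le h with h' | h'
  · obtain ⟨m, hm⟩ : ∃ m, n - i = m + 1 := ⟨n-i-1, by omega⟩
    have e : (X:ℤ⟦X⟧)^(i+1) * X^(Nat.choose (n-i) 2) = X^(Nat.choose (n-(i+1)) 2) * X^n := by
      rw [← pow_add, ← pow_add]; congr 1
      rw [hm, show n - (i+1) = m by omega, Nat.choose_succ_succ, Nat.choose_one_right]
      norm_num; omega
    calc (-1:ℤ⟦X⟧)^(i+1) * (X^(i+1) * gb n (i+1) + gb n i) * X^(Nat.choose (n-i) 2)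
        = (-1)^(i+1) * gb n (i+1) * (X^(i+1) * X^(Nat.choose (n-i) 2))
          + (-1)^(i+1) * gb n i * X^(Nat.choose (n-i) 2) := by ring
      _ = (-1)^(i+1) * gb n (i+1) * (X^(Nat.choose (n-(i+1)) 2) * X^n)
          + (-1)^(i+1) * gb n i * X^(Nat.choose (n-i) 2) := by rw [e]
      _ = (-1)^(i+1) * gb n (i+1) * X^(Nat.choose (n-(i+1)) 2) * X^n
          - (-1)^i * gb n i * X^(Nat.choose (n-i) 2) := by ring
  · subst h'
    rw [gb_of_lt (by omega : i < i+1), Nat.sub_self]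
    ring

lemma gauss (n : ℕ) :
    ∏ k ∈ range n, (Polynomial.C ((X:ℤ⟦X⟧)^k) - Polynomial.X) =
      ∑ j ∈ range (n+1), Polynomial.C (cc n j) * Polynomial.X ^ j := by
  induction n with
  | zero => simp [cc]
  | succ n ih =>
    rw [prod_range_succ, ih, mul_sub, Finset.sum_mul, Finset.sum_mul]
    have l1 : ∀ j, Polynomial.C (cc n j) * Polynomial.X^j * Polynomial.C ((X:ℤ⟦X⟧)^n)
        = Polynomial.C (cc n j * X^n) * Polynomial.X^j := by
      intro j; rw [Polynomial.C_mul]; ring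
    have l2 : ∀ j, Polynomial.C (cc n j) * Polynomial.X^j * Polynomial.X
        = Polynomial.C (cc n j) * Polynomial.X^(j+1) := by
      intro j; rw [pow_succ]; ring
    simp_rw [l1, l2]
    have hA : ∑ j ∈ range (n+1), Polynomial.C (cc n j * X^n) * Polynomial.X^j
        = Polynomial.C (cc n 0 * X^n)
          + ∑ i ∈ range (n+1), Polynomial.C (cc n (i+1) * X^n) * Polynomial.X^(i+1) := by
      rw [Finset.sum_range_succ (f := fun i => Polynomial.C (cc n (i+1) * X^n) * Polynomial.X^(i+1)),
        Finset.sum_range_succ', cc_top]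
      simp [add_comm]
    have hR : ∑ j ∈ range (n+2), Polynomial.C (cc (n+1) j) * Polynomial.X^j
        = Polynomial.C (cc (n+1) 0)
          + ∑ i ∈ range (n+1), Polynomial.C (cc (n+1) (i+1)) * Polynomial.X^(i+1) := by
      rw [Finset.sum_range_succ']
      simp [add_comm]
    rw [hA, hR]
    have hc0 : cc n 0 * X^n = cc (n+1) 0 := by
      unfold cc
      simp only [pow_zero, one_mul, gb_zero, mul_one, Nat.sub_zero, ← pow_add]
      congr 1
      rw [Nat.choose_succ_succ, Nat.choose_one_right]; norm_num; omega
    rw [hc0, add_sub_assoc, ← Finset.sum_sub_distrib]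
    congr 1
    refine Finset.sum_congr rfl (fun i hi => ?_)
    rw [cc_rec n i (by simpa using Nat.lt_succ_iff.mp (mem_range.mp hi)), map_sub, sub_mul]


lemma isUnit_one_sub_pow (l : ℕ) : IsUnit ((1 : ℤ⟦X⟧) - X^(l+1)) := by
  rw [PowerSeries.isUnit_iff_constantCoeff]
  simp

lemma isUnit_P (j : ℕ) : IsUnit (∏ l ∈ range j, ((1:ℤ⟦X⟧) - X^(l+1))) := by
  refine Finset.prod_induction _ IsUnit (fun a b => IsUnit.mul) isUnit_one ?_
  exact fun l _ => isUnit_one_sub_pow l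

lemma closed_form : ∀ n j, j ≤ n →
    gb n j * ∏ l ∈ range j, ((1:ℤ⟦X⟧) - X^(l+1)) = ∏ l ∈ range j, ((1:ℤ⟦X⟧) - X^(n-j+l+1)) := by
  intro n
  induction n with
  | zero =>
    intro j hj
    interval_cases j
    simp
  | succ n ih =>
    intro j hj
    match j with
    | 0 => simp
    | k+1 =>
      rcases le_or_gt (k+1) n with h | h
      · have ih1 := ih (k+1) h
        have ih2 := ih k (by omega)
        have hsplit : ∏ l ∈ range (k+1), ((1:ℤ⟦X⟧) - X^(l+1))
            = (∏ l ∈ range k, ((1:ℤ⟦X⟧) - X^(l+1))) * (1 - X^(k+1)) := prod_range_succ _ _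
        have hQ1 : ∏ l ∈ range (k+1), ((1:ℤ⟦X⟧) - X^(n-(k+1)+l+1))
            = (∏ l ∈ range k, ((1:ℤ⟦X⟧) - X^(n-k+l+1))) * (1 - X^(n-k)) := by
          rw [prod_range_succ']
          congr 1
          · refine Finset.prod_congr rfl (fun l _ => ?_)
            congr 2
            omega
          · congr 2
            omega
        have hR : ∏ l ∈ range (k+1), ((1:ℤ⟦X⟧) - X^(n+1-(k+1)+l+1))
            = (∏ l ∈ range k, ((1:ℤ⟦X⟧) - X^(n-k+l+1))) * (1 - X^(n+1)) := by
          rw [prod_range_succ]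
          congr 1
          · refine Finset.prod_congr rfl (fun l _ => ?_)
            congr 2
            omega
          · congr 2
            omega
        rw [gb_succ_succ, add_mul, ih1, hQ1, hsplit]
        have e : (X:ℤ⟦X⟧)^(n-k) * X^(k+1) = X^(n+1) := by rw [← pow_add]; congr 1; omega
        rw [hR]
        linear_combination (X^(n-k) * (1 - X^(k+1))) * ih2
          - (∏ l ∈ range k, ((1:ℤ⟦X⟧) - X^(n-k+l+1))) * e
      · have hjn : k + 1 = n + 1 := by omega
        rw [hjn, gb_self, one_mul]
        refine Finset.prod_congr rfl (fun l _ => ?_)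
        congr 2
        omega

lemma gb_symm (n j : ℕ) (h : j ≤ n) : gb n j = gb n (n-j) := by
  have h2 : n - j ≤ n := by omega
  have c1 := closed_form n j h
  have c2 := closed_form n (n-j) h2
  have split1 : ∏ l ∈ range n, ((1:ℤ⟦X⟧) - X^(l+1))
      = (∏ l ∈ range (n-j), ((1:ℤ⟦X⟧) - X^(l+1))) * ∏ l ∈ range j, ((1:ℤ⟦X⟧) - X^(n-j+l+1)) := by
    rw [← Finset.prod_range_add]
    refine Finset.prod_congr (by congr 1; omega) (fun l _ => rfl)
  have split2 : ∏ l ∈ range n, ((1:ℤ⟦X⟧) - X^(l+1))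
      = (∏ l ∈ range j, ((1:ℤ⟦X⟧) - X^(l+1))) * ∏ l ∈ range (n-j), ((1:ℤ⟦X⟧) - X^(j+l+1)) := by
    rw [← Finset.prod_range_add]
    refine Finset.prod_congr (by congr 1; omega) (fun l _ => rfl)
  have key : gb n j * ((∏ l ∈ range j, ((1:ℤ⟦X⟧) - X^(l+1))) * ∏ l ∈ range (n-j), ((1:ℤ⟦X⟧) - X^(l+1)))
      = gb n (n-j) * ((∏ l ∈ range j, ((1:ℤ⟦X⟧) - X^(l+1))) * ∏ l ∈ range (n-j), ((1:ℤ⟦X⟧) - X^(l+1))) := by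
    calc gb n j * ((∏ l ∈ range j, ((1:ℤ⟦X⟧) - X^(l+1))) * ∏ l ∈ range (n-j), ((1:ℤ⟦X⟧) - X^(l+1)))
        = (gb n j * ∏ l ∈ range j, ((1:ℤ⟦X⟧) - X^(l+1))) * ∏ l ∈ range (n-j), ((1:ℤ⟦X⟧) - X^(l+1)) := by ring
      _ = (∏ l ∈ range (n-j), ((1:ℤ⟦X⟧) - X^(l+1))) * ∏ l ∈ range j, ((1:ℤ⟦X⟧) - X^(n-j+l+1)) := by rw [c1]; ring
      _ = ∏ l ∈ range n, ((1:ℤ⟦X⟧) - X^(l+1)) := split1.symm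
      _ = (∏ l ∈ range j, ((1:ℤ⟦X⟧) - X^(l+1))) * ∏ l ∈ range (n-j), ((1:ℤ⟦X⟧) - X^(j+l+1)) := split2
      _ = gb n (n-j) * ((∏ l ∈ range j, ((1:ℤ⟦X⟧) - X^(l+1))) * ∏ l ∈ range (n-j), ((1:ℤ⟦X⟧) - X^(l+1))) := by
          have c2' : gb n (n-j) * ∏ l ∈ range (n-j), ((1:ℤ⟦X⟧) - X^(l+1))
              = ∏ l ∈ range (n-j), ((1:ℤ⟦X⟧) - X^(j+l+1)) := by
            rw [c2]
            refine Finset.prod_congr rfl (fun l _ => ?_)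
            congr 2
            omega
          linear_combination (∏ l ∈ range j, ((1:ℤ⟦X⟧) - X^(l+1))) * c2'.symm
  exact ((isUnit_P j).mul (isUnit_P (n-j))).mul_right_cancel key

lemma two_mul_choose_two (a : ℕ) : 2 * Nat.choose a 2 = a * (a-1) := by
  induction a with
  | zero => rfl
  | succ a ih =>
    rw [Nat.choose_succ_succ, Nat.choose_one_right, Nat.add_sub_cancel]
    cases a with
    | zero => rfl
    | succ b =>
      rw [Nat.succ_sub_one] at ih
      zify at ih ⊢
      linear_combination ih

lemma evalG1 (m : ℕ) : ∏ k ∈ range m, ((X:ℤ⟦X⟧)^k - X^m)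
    = X^(Nat.choose m 2) * ∏ i ∈ range m, ((1:ℤ⟦X⟧) - X^(i+1)) := by
  have h : ∀ k ∈ range m, (X:ℤ⟦X⟧)^k - X^m = X^k * (1 - X^(m-k)) := by
    intro k hk
    rw [mul_sub, mul_one, ← pow_add]
    congr 2
    exact (Nat.add_sub_cancel' (le_of_lt (mem_range.mp hk))).symm ▸ rfl
  rw [Finset.prod_congr rfl h, Finset.prod_mul_distrib]
  congr 1
  · rw [Finset.prod_pow_eq_pow_sum]
    congr 1
    have := Finset.sum_range_id_mul_two m
    have := two_mul_choose_two m
    omega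
  · calc ∏ k ∈ range m, ((1:ℤ⟦X⟧) - X^(m-k))
        = ∏ k ∈ range m, ((1:ℤ⟦X⟧) - X^((m-1-k)+1)) := by
          refine Finset.prod_congr rfl (fun k hk => ?_)
          have := mem_range.mp hk
          congr 2
          omega
      _ = ∏ i ∈ range m, ((1:ℤ⟦X⟧) - X^(i+1)) :=
          Finset.prod_range_reflect (fun i => (1:ℤ⟦X⟧) - X^(i+1)) m

lemma evalG2 (m : ℕ) : ∏ k ∈ range m, ((X:ℤ⟦X⟧)^(m+1+k) - X^m)
    = (-1)^m * X^(m*m) * ∏ i ∈ range m, ((1:ℤ⟦X⟧) - X^(i+1)) := by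
  have h : ∀ k ∈ range m, (X:ℤ⟦X⟧)^(m+1+k) - X^m = (-X^m) * (1 - X^(k+1)) := by
    intro k _
    have e : (X:ℤ⟦X⟧)^m * X^(k+1) = X^(m+1+k) := by rw [← pow_add]; congr 1; omega
    linear_combination -e
  rw [Finset.prod_congr rfl h, Finset.prod_mul_distrib, Finset.prod_const]
  rw [Finset.card_range, neg_pow, ← pow_mul]

lemma Fsplit (m : ℕ) : ∏ k ∈ range (2*m+1), (Polynomial.C ((X:ℤ⟦X⟧)^k) - Polynomial.X)
    = (Polynomial.C ((X:ℤ⟦X⟧)^m) - Polynomial.X) *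
      ((∏ k ∈ range m, (Polynomial.C ((X:ℤ⟦X⟧)^k) - Polynomial.X)) *
       (∏ k ∈ range m, (Polynomial.C ((X:ℤ⟦X⟧)^(m+1+k)) - Polynomial.X))) := by
  rw [show 2*m+1 = m + (m+1) by omega, Finset.prod_range_add,
    Finset.prod_range_succ' (fun x => Polynomial.C ((X:ℤ⟦X⟧)^(m+x)) - Polynomial.X) m]
  rw [add_zero]
  have : (∏ x ∈ range m, (Polynomial.C ((X:ℤ⟦X⟧)^(m+(x+1))) - Polynomial.X))
      = ∏ x ∈ range m, (Polynomial.C ((X:ℤ⟦X⟧)^(m+1+x)) - Polynomial.X) := by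
    refine Finset.prod_congr rfl (fun x _ => ?_)
    rw [show m+(x+1) = m+1+x by omega]
  rw [this]
  ring

lemma hL (m : ℕ) :
    Polynomial.eval ((X:ℤ⟦X⟧)^m)
      (Polynomial.derivative (∏ k ∈ range (2*m+1), (Polynomial.C ((X:ℤ⟦X⟧)^k) - Polynomial.X)))
    = (-1)^(m+1) * (X^(Nat.choose m 2 + m*m) * (∏ i ∈ range m, ((1:ℤ⟦X⟧) - X^(i+1)))^2) := by
  rw [Fsplit, Polynomial.derivative_mul]
  simp only [Polynomial.derivative_sub, Polynomial.derivative_C, Polynomial.derivative_X,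
    zero_sub, Polynomial.eval_add, Polynomial.eval_mul, Polynomial.eval_sub, Polynomial.eval_C,
    Polynomial.eval_X, Polynomial.eval_neg, Polynomial.eval_one, Polynomial.eval_prod, sub_self,
    zero_mul, add_zero, neg_mul, one_mul]
  rw [evalG1, evalG2]
  ring

lemma hR (m : ℕ) :
    Polynomial.eval ((X:ℤ⟦X⟧)^m)
      (Polynomial.derivative (∑ j ∈ range (2*m+1+1), Polynomial.C (cc (2*m+1) j) * Polynomial.X ^ j))
    = ∑ j ∈ range (2*m+1+1), cc (2*m+1) j * (j : ℤ⟦X⟧) * X^(m*(j-1)) := by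
  rw [Polynomial.derivative_sum]
  simp_rw [Polynomial.derivative_C_mul_X_pow]
  rw [Polynomial.eval_finset_sum]
  refine Finset.sum_congr rfl (fun j _ => ?_)
  rw [Polynomial.eval_mul, Polynomial.eval_C, Polynomial.eval_pow, Polynomial.eval_X, ← pow_mul]

lemma pair_term (m t : ℕ) (ht : t ≤ m) :
    cc (2*m+1) (m-t) * ((m-t : ℕ) : ℤ⟦X⟧) * X^(m*((m-t)-1))
      + cc (2*m+1) (m+1+t) * ((m+1+t : ℕ) : ℤ⟦X⟧) * X^(m*(m+t))
    = (-1)^(m+1+t) * (2*(t:ℤ⟦X⟧)+1) * gb (2*m+1) (m+1+t)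
        * X^(Nat.choose (m-t) 2 + m*(m+t)) := by
  have hsym : gb (2*m+1) (m-t) = gb (2*m+1) (m+1+t) := by
    have h := gb_symm (2*m+1) (m-t) (by omega)
    rwa [show 2*m+1 - (m-t) = m+1+t by omega] at h
  unfold cc
  rw [show 2*m+1 - (m+1+t) = m-t by omega, show 2*m+1 - (m-t) = m+1+t by omega, hsym]
  rcases eq_or_lt_of_le ht with h | h
  · subst h
    rw [Nat.sub_self]
    push_cast
    ring
  · obtain ⟨b, hb⟩ : ∃ b, m = t + (b+1) := ⟨m - t - 1, by omega⟩
    subst hb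
    have h1 := two_mul_choose_two (t + (b+1) + 1 + t)
    have h2 := two_mul_choose_two (t + (b+1) - t)
    rw [show t + (b+1) + 1 + t - 1 = t + (b+1) + t by omega] at h1
    rw [show t + (b+1) - t = b + 1 by omega] at h2
    rw [show b + 1 - 1 = b by omega] at h2
    have e : Nat.choose (t+(b+1)+1+t) 2 + (t+(b+1))*((t+(b+1)-t)-1)
        = Nat.choose (t+(b+1)-t) 2 + (t+(b+1))*((t+(b+1))+t) := by
      have doubled : 2 * (Nat.choose (t+(b+1)+1+t) 2 + (t+(b+1))*((t+(b+1)-t)-1))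
          = 2 * (Nat.choose (t+(b+1)-t) 2 + (t+(b+1))*((t+(b+1))+t)) := by
        rw [show (t+(b+1)-t)-1 = b by omega, show t+(b+1)-t = b+1 by omega]
        zify at h1 h2 ⊢
        linear_combination h1 - h2
      exact Nat.eq_of_mul_eq_mul_left (by norm_num) doubled
    have epow : (X:ℤ⟦X⟧)^(Nat.choose (t+(b+1)+1+t) 2) * X^((t+(b+1))*((t+(b+1)-t)-1))
        = X^(Nat.choose (t+(b+1)-t) 2 + (t+(b+1))*((t+(b+1))+t)) := by
      rw [← pow_add, e]
    have hpow2 : (X:ℤ⟦X⟧)^(Nat.choose (t+(b+1)-t) 2) * X^((t+(b+1))*((t+(b+1))+t))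
        = X^(Nat.choose (t+(b+1)-t) 2 + (t+(b+1))*((t+(b+1))+t)) := by
      rw [← pow_add]
    have hodd : (-1:ℤ⟦X⟧)^(t+(b+1)-t) = -(-1)^((t+(b+1))+1+t) := by
      rw [show (t+(b+1))+1+t = (t+(b+1)-t) + (2*t+1) by omega, pow_add, pow_succ, pow_mul]
      norm_num
    have hc : (((t+(b+1))+1+t : ℕ) : ℤ⟦X⟧) - ((t+(b+1)-t : ℕ) : ℤ⟦X⟧) = 2*(t:ℤ⟦X⟧)+1 := by
      rw [show t+(b+1)-t = b+1 by omega]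
      push_cast
      ring
    set g := gb (2*(t+(b+1))+1) ((t+(b+1))+1+t) with hg
    linear_combination (g * X^(Nat.choose (t+(b+1)+1+t) 2) * ((t+(b+1)-t : ℕ) : ℤ⟦X⟧)
        * X^((t+(b+1))*((t+(b+1)-t)-1))) * hodd
      - ((-1:ℤ⟦X⟧)^((t+(b+1))+1+t) * g * ((t+(b+1)-t : ℕ) : ℤ⟦X⟧)) * epow
      + ((-1:ℤ⟦X⟧)^((t+(b+1))+1+t) * g * (((t+(b+1))+1+t : ℕ) : ℤ⟦X⟧)) * hpow2
      + ((-1:ℤ⟦X⟧)^((t+(b+1))+1+t) * g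
          * X^(Nat.choose (t+(b+1)-t) 2 + (t+(b+1))*((t+(b+1))+t))) * hc

lemma two_mul_choose_two' (a : ℕ) : 2 * Nat.choose a 2 + a = a * a := by
  induction a with
  | zero => rfl
  | succ a ih =>
    rw [Nat.choose_succ_succ, Nat.choose_one_right]
    zify at ih ⊢
    linear_combination ih

lemma exp2 (m t : ℕ) (ht : t ≤ m) :
    Nat.choose (m-t) 2 + m*(m+t) = (Nat.choose m 2 + m*m) + Nat.choose (t+1) 2 := by
  have h1 := two_mul_choose_two' m
  have h3 := two_mul_choose_two' (t+1)
  have h2 := two_mul_choose_two' (m-t)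
  have doubled : 2 * (Nat.choose (m-t) 2 + m*(m+t))
      = 2 * ((Nat.choose m 2 + m*m) + Nat.choose (t+1) 2) := by
    zify [ht] at h1 h2 h3 ⊢
    linear_combination h2 - h1 - h3
  exact Nat.eq_of_mul_eq_mul_left (by norm_num) doubled

lemma key_sq (m : ℕ) :
    (∏ i ∈ range m, ((1:ℤ⟦X⟧) - X^(i+1)))^2
      = ∑ t ∈ range (m+1), (-1)^t * (2*(t:ℤ⟦X⟧)+1) * gb (2*m+1) (m+1+t) * X^(Nat.choose (t+1) 2) := by
  have main : (-1:ℤ⟦X⟧)^(m+1) * (X^(Nat.choose m 2 + m*m) * (∏ i ∈ range m, ((1:ℤ⟦X⟧) - X^(i+1)))^2)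
      = ∑ j ∈ range (2*m+1+1), cc (2*m+1) j * (j:ℤ⟦X⟧) * X^(m*(j-1)) :=
    calc (-1:ℤ⟦X⟧)^(m+1) * (X^(Nat.choose m 2 + m*m) * (∏ i ∈ range m, ((1:ℤ⟦X⟧) - X^(i+1)))^2)
        = Polynomial.eval ((X:ℤ⟦X⟧)^m) (Polynomial.derivative
            (∏ k ∈ range (2*m+1), (Polynomial.C ((X:ℤ⟦X⟧)^k) - Polynomial.X))) := (hL m).symm
      _ = Polynomial.eval ((X:ℤ⟦X⟧)^m) (Polynomial.derivative
            (∑ j ∈ range (2*m+1+1), Polynomial.C (cc (2*m+1) j) * Polynomial.X ^ j)) := by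
          rw [gauss (2*m+1)]
      _ = ∑ j ∈ range (2*m+1+1), cc (2*m+1) j * (j:ℤ⟦X⟧) * X^(m*(j-1)) := hR m
  have pairsum : ∑ j ∈ range (2*m+1+1), cc (2*m+1) j * (j:ℤ⟦X⟧) * X^(m*(j-1))
      = ∑ t ∈ range (m+1), (-1:ℤ⟦X⟧)^(m+1+t) * (2*(t:ℤ⟦X⟧)+1) * gb (2*m+1) (m+1+t)
          * X^(Nat.choose (m-t) 2 + m*(m+t)) := by
    rw [show 2*m+1+1 = (m+1) + (m+1) by omega, Finset.sum_range_add,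
      ← Finset.sum_range_reflect (fun j => cc (2*m+1) j * (j:ℤ⟦X⟧) * X^(m*(j-1))) (m+1),
      ← Finset.sum_add_distrib]
    refine Finset.sum_congr rfl (fun t ht => ?_)
    have ht' : t ≤ m := by have := mem_range.mp ht; omega
    have hp := pair_term m t ht'
    rw [show m+1-1-t = m-t by omega, show m+1+t-1 = m+t by omega]
    exact hp
  have expand : ∑ t ∈ range (m+1), (-1:ℤ⟦X⟧)^(m+1+t) * (2*(t:ℤ⟦X⟧)+1) * gb (2*m+1) (m+1+t)
        * X^(Nat.choose (m-t) 2 + m*(m+t))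
      = (-1:ℤ⟦X⟧)^(m+1) * (X^(Nat.choose m 2 + m*m) *
          ∑ t ∈ range (m+1), (-1)^t * (2*(t:ℤ⟦X⟧)+1) * gb (2*m+1) (m+1+t) * X^(Nat.choose (t+1) 2)) := by
    rw [Finset.mul_sum, Finset.mul_sum]
    refine Finset.sum_congr rfl (fun t ht => ?_)
    have ht' : t ≤ m := by have := mem_range.mp ht; omega
    rw [exp2 m t ht', pow_add, pow_add, pow_add]
    ring
  rw [pairsum, expand] at main
  have main2 := mul_left_cancel₀ (pow_ne_zero _ (neg_ne_zero.mpr (one_ne_zero (α := ℤ⟦X⟧)))) main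
  exact mul_left_cancel₀ (pow_ne_zero _ PowerSeries.X_ne_zero) main2

lemma prod_one_sub_dvd (s : Finset ℕ) (e : ℕ → ℕ) (r : ℕ) (h : ∀ i ∈ s, r ≤ e i) :
    (X:ℤ⟦X⟧)^r ∣ (∏ i ∈ s, ((1:ℤ⟦X⟧) - X^(e i))) - 1 := by
  classical
  induction s using Finset.induction_on with
  | empty => simp
  | @insert a s ha ih =>
    rw [Finset.prod_insert ha]
    have ihs := ih (fun i hi => h i (mem_insert_of_mem hi))
    have ha' : r ≤ e a := h a (mem_insert_self _ _)
    have hre : ((1:ℤ⟦X⟧) - X^(e a)) * (∏ i ∈ s, ((1:ℤ⟦X⟧) - X^(e i))) - 1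
        = ((∏ i ∈ s, ((1:ℤ⟦X⟧) - X^(e i))) - 1)
          - X^(e a) * (∏ i ∈ s, ((1:ℤ⟦X⟧) - X^(e i))) := by ring
    rw [hre]
    exact dvd_sub ihs ((pow_dvd_pow (X:ℤ⟦X⟧) ha').mul_right _)

lemma coeff_mul_dvd (k T r : ℕ) (c f : ℤ⟦X⟧) (hdvd : (X:ℤ⟦X⟧)^r ∣ f - 1) (hk : k < T + r) :
    coeff (R := ℤ) k (c * X^T * f) = coeff (R := ℤ) k (c * X^T) := by
  have hre : c * X^T * f = c * X^T + (c * (X^T * (f - 1))) := by ring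
  rw [hre, map_add]
  have hz : coeff (R := ℤ) k (c * (X^T * (f-1))) = 0 := by
    refine PowerSeries.X_pow_dvd_iff.mp ?_ k hk
    obtain ⟨g, hg⟩ := hdvd
    exact ⟨c*g, by rw [hg, pow_add]; ring⟩
  rw [hz, add_zero]

lemma le_choose (t : ℕ) : t ≤ Nat.choose (t+1) 2 := by
  induction t with
  | zero => simp
  | succ t ih =>
    rw [Nat.choose_succ_succ, Nat.choose_one_right]
    omega

lemma gbP_dvd (m t : ℕ) (ht : t ≤ m) :
    (X:ℤ⟦X⟧)^(m-t+1) ∣ (gb (2*m+1) (m+1+t) * ∏ i ∈ range m, ((1:ℤ⟦X⟧) - X^(i+1))) - 1 := by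
  have hsym : gb (2*m+1) (m+1+t) = gb (2*m+1) (m-t) := by
    have h := gb_symm (2*m+1) (m-t) (by omega)
    rw [show 2*m+1 - (m-t) = m+1+t by omega] at h
    exact h.symm
  have hsplit : ∏ i ∈ range m, ((1:ℤ⟦X⟧) - X^(i+1))
      = (∏ i ∈ range (m-t), ((1:ℤ⟦X⟧) - X^(i+1))) * ∏ i ∈ range t, ((1:ℤ⟦X⟧) - X^((m-t)+i+1)) := by
    rw [← Finset.prod_range_add]
    refine Finset.prod_congr (by congr 1; omega) (fun i _ => rfl)
  have hcf := closed_form (2*m+1) (m-t) (by omega)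
  rw [hsym, hsplit, ← mul_assoc, hcf]
  have d1 : (X:ℤ⟦X⟧)^(m-t+1) ∣ (∏ l ∈ range (m-t), ((1:ℤ⟦X⟧) - X^(2*m+1-(m-t)+l+1))) - 1 :=
    prod_one_sub_dvd _ _ _ (fun l _ => by omega)
  have d2 : (X:ℤ⟦X⟧)^(m-t+1) ∣ (∏ i ∈ range t, ((1:ℤ⟦X⟧) - X^((m-t)+i+1))) - 1 :=
    prod_one_sub_dvd _ _ _ (fun l _ => by omega)
  have hre : (∏ l ∈ range (m-t), ((1:ℤ⟦X⟧) - X^(2*m+1-(m-t)+l+1)))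
        * (∏ i ∈ range t, ((1:ℤ⟦X⟧) - X^((m-t)+i+1))) - 1
      = (∏ l ∈ range (m-t), ((1:ℤ⟦X⟧) - X^(2*m+1-(m-t)+l+1)))
          * ((∏ i ∈ range t, ((1:ℤ⟦X⟧) - X^((m-t)+i+1))) - 1)
        + ((∏ l ∈ range (m-t), ((1:ℤ⟦X⟧) - X^(2*m+1-(m-t)+l+1))) - 1) := by ring
  rw [hre]
  exact dvd_add (d2.mul_left _) d1

lemma keyB (m k : ℕ) (hk : k ≤ m) :
    coeff (R := ℤ) k ((∏ i ∈ range m, ((1:ℤ⟦X⟧) - X^(i+1)))^3)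
      = coeff (R := ℤ) k (∑ t ∈ range (m+1),
          PowerSeries.C (R := ℤ) ((-1)^t * (2*(t:ℤ)+1)) * X^(Nat.choose (t+1) 2)) := by
  have h3 : (∏ i ∈ range m, ((1:ℤ⟦X⟧) - X^(i+1)))^3
      = ∑ t ∈ range (m+1), ((-1)^t * (2*(t:ℤ⟦X⟧)+1) * gb (2*m+1) (m+1+t) * X^(Nat.choose (t+1) 2))
          * ∏ i ∈ range m, ((1:ℤ⟦X⟧) - X^(i+1)) := by
    rw [← Finset.sum_mul, ← key_sq]
    ring
  rw [h3, map_sum, map_sum]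
  refine Finset.sum_congr rfl (fun t ht => ?_)
  have ht' : t ≤ m := by have := mem_range.mp ht; omega
  have hC : (PowerSeries.C (R := ℤ) ((-1)^t * (2*(t:ℤ)+1))) = (-1:ℤ⟦X⟧)^t * (2*(t:ℤ⟦X⟧)+1) := by
    rw [map_mul, map_pow, map_neg, map_one, map_add, map_mul, map_one]
    norm_num
  have e : ((-1:ℤ⟦X⟧)^t * (2*(t:ℤ⟦X⟧)+1) * gb (2*m+1) (m+1+t) * X^(Nat.choose (t+1) 2))
        * ∏ i ∈ range m, ((1:ℤ⟦X⟧) - X^(i+1))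
      = ((-1:ℤ⟦X⟧)^t * (2*(t:ℤ⟦X⟧)+1)) * X^(Nat.choose (t+1) 2)
        * (gb (2*m+1) (m+1+t) * ∏ i ∈ range m, ((1:ℤ⟦X⟧) - X^(i+1))) := by ring
  rw [e, hC]
  exact coeff_mul_dvd k _ _ _ _ (gbP_dvd m t ht') (by have := le_choose t; omega)

end JacobiAux

lemma tri_eq (n : ℕ) : Nat.choose (n+1) 2 = n*(n+1)/2 := by
  rw [Nat.choose_two_right, Nat.add_sub_cancel, Nat.mul_comm]

/-- **Jacobi's identity** `∏_{n=1}^∞ (1 − qⁿ)³ = ∑_{n=0}^∞ (−1)ⁿ(2n+1) q^{n(n+1)/2}` in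
`ℤ[[q]]`, stated coefficientwise: both sides converge in the `q`-adic topology because each
coefficient of the partial products/sums stabilizes, and for every `k` the (stabilized)
`k`-th coefficients agree.  Concretely, for all `N ≥ k` the `k`-th coefficient of
`∏_{n=0}^{N} (1 − q^{n+1})³` equals the `k`-th coefficient of
`∑_{n=0}^{N} (−1)ⁿ(2n+1) q^{n(n+1)/2}`. -/
theorem jacobi_identity (k N : ℕ) (hkN : k ≤ N) :
    PowerSeries.coeff (R := ℤ) k (∏ n ∈ Finset.range (N + 1), (1 - (PowerSeries.X : ℤ⟦X⟧) ^ (n + 1)) ^ 3) =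
      PowerSeries.coeff (R := ℤ) k (∑ n ∈ Finset.range (N + 1),
        PowerSeries.C (R := ℤ) ((-1) ^ n * (2 * n + 1)) * (PowerSeries.X : ℤ⟦X⟧) ^ (n * (n + 1) / 2)) := by
  have hB := JacobiAux.keyB (N+1) k (by omega)
  rw [Finset.prod_pow, hB, Finset.sum_range_succ, map_add]
  have hz : PowerSeries.coeff (R := ℤ) k (PowerSeries.C (R := ℤ) ((-1)^(N+1) * (2*((N+1:ℕ):ℤ)+1))
      * (PowerSeries.X:ℤ⟦X⟧)^(Nat.choose (N+1+1) 2)) = 0 := by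
    rw [PowerSeries.coeff_C_mul, PowerSeries.coeff_X_pow, if_neg, mul_zero]
    have := JacobiAux.le_choose (N+1)
    omega
  rw [hz, add_zero]
  congr 1
  refine Finset.sum_congr rfl (fun t _ => ?_)
  rw [tri_eq]
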